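/- Let H = I7 ∨ C5 be the join of a 7-vertex independent set and a 5-cycle (so |H| = 12). Then for every balanced partition V(H) = A ∪ A^c with |A| = |A^c| = 6, we have max{e(A), e(A^c)} ≥ 10, and there is a balanced partition achieving max{e(A), e(A^c)} = 10. Hence D^b_{2,∞}(H) = 10 = (5/72)|H|². -/

import Mathlib

open scoped Classical

noncomputable def edgesIn {V : Type*} [Fintype V] (G : SimpleGraph V) (A : Finset V) : ℕ :=
  (G.edgeFinset.filter fun e => ∀ v ∈ e, v ∈ A).card

def HI7C5 : SimpleGraph (Fin 7 ⊕ Fin 5) :=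
  SimpleGraph.fromRel (fun x y =>
    (x.isLeft = true ∧ y.isRight = true) ∨
    (∃ i j : Fin 5, x = Sum.inr i ∧ y = Sum.inr j ∧ (j : ZMod 5) = (i : ZMod 5) + 1))

def adjB : Fin 7 ⊕ Fin 5 → Fin 7 ⊕ Fin 5 → Prop := fun x y =>
  match x, y with
  | .inl _, .inr _ => True
  | .inr _, .inl _ => True
  | .inr i, .inr j => (j : ZMod 5) = (i : ZMod 5) + 1 ∨ (i : ZMod 5) = (j : ZMod 5) + 1
  | _, _ => False

instance adjB.decRel : DecidableRel adjB := fun x y => by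
  rcases x with a | a <;> rcases y with b | b <;> unfold adjB <;> dsimp <;> infer_instance

lemma adjB_symm : Symmetric adjB := by
  intro x y h
  rcases x with a | a <;> rcases y with b | b <;> unfold adjB at * <;> dsimp at * <;> tauto

lemma adjB_irrefl : Irreflexive adjB := by
  intro x h
  rcases x with a | a <;> simp [adjB] at h

def G' : SimpleGraph (Fin 7 ⊕ Fin 5) where
  Adj := adjB
  symm := ⟨fun _ _ h => adjB_symm h⟩
  loopless := ⟨adjB_irrefl⟩

instance G'.decRel : DecidableRel G'.Adj := fun x y => inferInstanceAs (Decidable (adjB x y))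

instance H.decRel : DecidableRel HI7C5.Adj := fun x y =>
  decidable_of_iff _ (SimpleGraph.fromRel_adj _ x y).symm

lemma adj_iff : ∀ x y, HI7C5.Adj x y ↔ G'.Adj x y := by decide

lemma HG' : HI7C5 = G' := by
  ext x y; exact adj_iff x y

/-- The subgraph of `G'` induced on `A` (kept on the full vertex set). -/
def GA (A : Finset (Fin 7 ⊕ Fin 5)) : SimpleGraph (Fin 7 ⊕ Fin 5) where
  Adj u v := adjB u v ∧ u ∈ A ∧ v ∈ A
  symm := ⟨by intro u v ⟨h, hu, hv⟩; exact ⟨adjB_symm h, hv, hu⟩⟩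
  loopless := ⟨by intro u ⟨h, _⟩; exact adjB_irrefl u h⟩

instance GA.decRel (A : Finset (Fin 7 ⊕ Fin 5)) : DecidableRel (GA A).Adj := fun x y =>
  inferInstanceAs (Decidable (adjB x y ∧ x ∈ A ∧ y ∈ A))

def cnt (A : Finset (Fin 7 ⊕ Fin 5)) : ℕ :=
  (Finset.univ.filter fun p : (Fin 7 ⊕ Fin 5) × (Fin 7 ⊕ Fin 5) =>
    adjB p.1 p.2 ∧ p.1 ∈ A ∧ p.2 ∈ A).card / 2

lemma edgesIn_eq (A : Finset (Fin 7 ⊕ Fin 5)) : edgesIn G' A = cnt A := by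
  have h1 : edgesIn G' A = (GA A).edgeFinset.card := by
    unfold edgesIn
    congr 1
    ext e
    induction e with
    | _ u v =>
      simp only [Finset.mem_filter, SimpleGraph.mem_edgeFinset]
      simp only [Finset.mem_filter, SimpleGraph.mem_edgeFinset, SimpleGraph.mem_edgeSet,
        Sym2.mem_iff, GA]
      constructor
      · rintro ⟨h, ha⟩
        exact ⟨h, ha u (Or.inl rfl), ha v (Or.inr rfl)⟩
      · rintro ⟨h, hu, hv⟩
        exact ⟨h, fun w hw => by rcases hw with rfl | rfl <;> assumption⟩
  have h2 := (GA A).two_mul_card_edgeFinset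
  have h3 : (Finset.univ.filter fun (x, y) => (GA A).Adj x y) =
      (Finset.univ.filter fun p : (Fin 7 ⊕ Fin 5) × (Fin 7 ⊕ Fin 5) =>
        adjB p.1 p.2 ∧ p.1 ∈ A ∧ p.2 ∈ A) := by
    ext ⟨u, v⟩
    simp only [Finset.mem_filter, Finset.mem_univ, true_and]
    simp [GA]
  rw [h3] at h2
  unfold cnt
  omega

/-- Ordered adjacent pairs of the 5-cycle inside `S`. -/
def c2r (S : Finset (Fin 5)) : ℕ :=
  (Finset.univ.filter fun p : Fin 5 × Fin 5 =>
    ((p.2 : ZMod 5) = (p.1 : ZMod 5) + 1 ∨ (p.1 : ZMod 5) = (p.2 : ZMod 5) + 1) ∧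
      p.1 ∈ S ∧ p.2 ∈ S).card

def Lof (A : Finset (Fin 7 ⊕ Fin 5)) : Finset (Fin 7) :=
  Finset.univ.filter fun i => (Sum.inl i : Fin 7 ⊕ Fin 5) ∈ A

def Sof (A : Finset (Fin 7 ⊕ Fin 5)) : Finset (Fin 5) :=
  Finset.univ.filter fun j => (Sum.inr j : Fin 7 ⊕ Fin 5) ∈ A

lemma Lof_compl (A : Finset (Fin 7 ⊕ Fin 5)) : Lof Aᶜ = (Lof A)ᶜ := by
  ext i; simp [Lof]

lemma Sof_compl (A : Finset (Fin 7 ⊕ Fin 5)) : Sof Aᶜ = (Sof A)ᶜ := by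
  ext j; simp [Sof]

lemma card_split (A : Finset (Fin 7 ⊕ Fin 5)) : A.card = (Lof A).card + (Sof A).card := by
  have hA : A = (Lof A).image Sum.inl ∪ (Sof A).image Sum.inr := by
    ext x
    rcases x with a | a <;> simp [Lof, Sof]
  conv_lhs => rw [hA]
  rw [ Finset.card_union_of_disjoint, Finset.card_image_of_injective _ Sum.inl_injective,
    Finset.card_image_of_injective _ Sum.inr_injective]
  rw [Finset.disjoint_left]
  rintro x hx hy
  simp only [Finset.mem_image] at hx hy
  obtain ⟨a, -, rfl⟩ := hx
  obtain ⟨b, -, h⟩ := hy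
  exact Sum.inl_ne_inr h.symm

lemma cnt_formula (A : Finset (Fin 7 ⊕ Fin 5)) :
    cnt A = (2 * ((Lof A).card * (Sof A).card) + c2r (Sof A)) / 2 := by
  unfold cnt
  congr 1
  have hset : (Finset.univ.filter fun p : (Fin 7 ⊕ Fin 5) × (Fin 7 ⊕ Fin 5) =>
      adjB p.1 p.2 ∧ p.1 ∈ A ∧ p.2 ∈ A) =
      (((Lof A) ×ˢ (Sof A)).image fun q => ((Sum.inl q.1 : Fin 7 ⊕ Fin 5), (Sum.inr q.2 : Fin 7 ⊕ Fin 5)))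
      ∪ (((Sof A) ×ˢ (Lof A)).image fun q => ((Sum.inr q.1 : Fin 7 ⊕ Fin 5), (Sum.inl q.2 : Fin 7 ⊕ Fin 5)))
      ∪ ((Finset.univ.filter fun p : Fin 5 × Fin 5 =>
            ((p.2 : ZMod 5) = (p.1 : ZMod 5) + 1 ∨ (p.1 : ZMod 5) = (p.2 : ZMod 5) + 1) ∧
              p.1 ∈ Sof A ∧ p.2 ∈ Sof A).image
          fun q => ((Sum.inr q.1 : Fin 7 ⊕ Fin 5), (Sum.inr q.2 : Fin 7 ⊕ Fin 5))) := by
    ext ⟨x, y⟩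
    rcases x with a | a <;> rcases y with b | b <;>
      simp only [Finset.mem_filter, Finset.mem_univ, true_and] <;>
      simp [adjB, Lof, Sof, Prod.ext_iff] <;> tauto
  rw [hset]
  have d1 : Disjoint
      (((Lof A) ×ˢ (Sof A)).image fun q => ((Sum.inl q.1 : Fin 7 ⊕ Fin 5), (Sum.inr q.2 : Fin 7 ⊕ Fin 5)))
      (((Sof A) ×ˢ (Lof A)).image fun q => ((Sum.inr q.1 : Fin 7 ⊕ Fin 5), (Sum.inl q.2 : Fin 7 ⊕ Fin 5))) := by
    rw [Finset.disjoint_left]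
    rintro ⟨x, y⟩ hx hy
    simp only [Finset.mem_image, Prod.ext_iff] at hx hy
    obtain ⟨q, -, hq1, -⟩ := hx
    obtain ⟨r, -, hr1, -⟩ := hy
    rw [← hq1] at hr1
    exact Sum.inl_ne_inr hr1.symm
  have d2 : Disjoint
      ((((Lof A) ×ˢ (Sof A)).image fun q => ((Sum.inl q.1 : Fin 7 ⊕ Fin 5), (Sum.inr q.2 : Fin 7 ⊕ Fin 5)))
        ∪ (((Sof A) ×ˢ (Lof A)).image fun q => ((Sum.inr q.1 : Fin 7 ⊕ Fin 5), (Sum.inl q.2 : Fin 7 ⊕ Fin 5))))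
      ((Finset.univ.filter fun p : Fin 5 × Fin 5 =>
            ((p.2 : ZMod 5) = (p.1 : ZMod 5) + 1 ∨ (p.1 : ZMod 5) = (p.2 : ZMod 5) + 1) ∧
              p.1 ∈ Sof A ∧ p.2 ∈ Sof A).image
          fun q => ((Sum.inr q.1 : Fin 7 ⊕ Fin 5), (Sum.inr q.2 : Fin 7 ⊕ Fin 5))) := by
    rw [Finset.disjoint_left]
    rintro ⟨x, y⟩ hx hy
    simp only [Finset.mem_union, Finset.mem_image, Prod.ext_iff] at hx hy
    obtain ⟨r, -, hr1, hr2⟩ := hy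
    rcases hx with ⟨q, -, hq1, -⟩ | ⟨q, -, -, hq2⟩
    · rw [← hq1] at hr1; exact Sum.inl_ne_inr hr1.symm
    · rw [← hq2] at hr2; exact Sum.inl_ne_inr hr2.symm
  have inj1 : Function.Injective
      (fun q : Fin 7 × Fin 5 => ((Sum.inl q.1 : Fin 7 ⊕ Fin 5), (Sum.inr q.2 : Fin 7 ⊕ Fin 5))) := by
    rintro ⟨a, b⟩ ⟨c, d⟩ h
    simp only [Prod.ext_iff, Sum.inl.injEq, Sum.inr.injEq] at h
    exact Prod.ext h.1 h.2
  have inj2 : Function.Injective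
      (fun q : Fin 5 × Fin 7 => ((Sum.inr q.1 : Fin 7 ⊕ Fin 5), (Sum.inl q.2 : Fin 7 ⊕ Fin 5))) := by
    rintro ⟨a, b⟩ ⟨c, d⟩ h
    simp only [Prod.ext_iff, Sum.inl.injEq, Sum.inr.injEq] at h
    exact Prod.ext h.1 h.2
  have inj3 : Function.Injective
      (fun q : Fin 5 × Fin 5 => ((Sum.inr q.1 : Fin 7 ⊕ Fin 5), (Sum.inr q.2 : Fin 7 ⊕ Fin 5))) := by
    rintro ⟨a, b⟩ ⟨c, d⟩ h
    simp only [Prod.ext_iff, Sum.inr.injEq] at h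
    exact Prod.ext h.1 h.2
  rw [Finset.card_union_of_disjoint d2, Finset.card_union_of_disjoint d1,
    Finset.card_image_of_injective _ inj1, Finset.card_image_of_injective _ inj2,
    Finset.card_image_of_injective _ inj3, Finset.card_product, Finset.card_product]
  unfold c2r
  ring

lemma key : ∀ T : Finset (Fin 5),
    max ((2 * ((6 - T.card) * T.card) + c2r T) / 2)
      ((2 * ((7 - (6 - T.card)) * (5 - T.card)) + c2r Tᶜ) / 2) ≥ 10 := by decide

theorem stmt_11 :
    (∀ A : Finset (Fin 7 ⊕ Fin 5), A.card = 6 →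
        max (edgesIn HI7C5 A) (edgesIn HI7C5 Aᶜ) ≥ 10) ∧
      (∃ A : Finset (Fin 7 ⊕ Fin 5), A.card = 6 ∧
        max (edgesIn HI7C5 A) (edgesIn HI7C5 Aᶜ) = 10) := by
  constructor
  · intro A hA
    rw [HG', edgesIn_eq, edgesIn_eq, cnt_formula, cnt_formula, Lof_compl, Sof_compl]
    have hc := card_split A
    rw [hA] at hc
    have hS5 : (Sof A).card ≤ 5 := by
      simpa using Finset.card_le_univ (Sof A)
    have hL : (Lof A).card = 6 - (Sof A).card := by omega
    have hLc : ((Lof A)ᶜ).card = 7 - (Lof A).card := by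
      rw [Finset.card_compl]; simp
    have hSc : ((Sof A)ᶜ).card = 5 - (Sof A).card := by
      rw [Finset.card_compl]; simp
    rw [hLc, hSc, hL]
    exact key (Sof A)
  · refine ⟨({0, 1, 2, 3, 4, 5} : Finset (Fin 7)).image Sum.inl, by decide, ?_⟩
    rw [HG', edgesIn_eq, edgesIn_eq]
    decide
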